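/- For A, B ∈ U(2,1), the quantity 1 + (a₃₁b₁₃ + a₃₂b₂₃)/(a₃₃b₃₃) has positive real part; equivalently |a₃₁b₁₃ + a₃₂b₂₃| < |a₃₃b₃₃|. -/

import Mathlib

noncomputable section

open Matrix Complex

/-- J = diag(1,1,-1). -/
def J21 : Matrix (Fin 3) (Fin 3) ℂ := Matrix.diagonal ![1, 1, -1]

/-- A ∈ U(2,1): J A† J is a two-sided inverse of A, i.e. J Aᴴ J = A⁻¹. -/
def inU21 (A : Matrix (Fin 3) (Fin 3) ℂ) : Prop :=
  A * (J21 * Aᴴ * J21) = 1 ∧ (J21 * Aᴴ * J21) * A = 1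

theorem stmt8 (A B : Matrix (Fin 3) (Fin 3) ℂ) (hA : inU21 A) (hB : inU21 B) :
    0 < (1 + (A 2 0 * B 0 2 + A 2 1 * B 1 2) / (A 2 2 * B 2 2)).re ∧
      ‖A 2 0 * B 0 2 + A 2 1 * B 1 2‖ < ‖A 2 2 * B 2 2‖ := by
  have h := congrFun (congrFun hA.1 2) 2
  have h2 := congrFun (congrFun hB.2 2) 2
  simp [Matrix.mul_apply, Fin.sum_univ_three, J21, Matrix.one_apply, Matrix.diagonal,
    conjTranspose_apply] at h h2
  set a0 := ‖A 2 0‖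
  set a1 := ‖A 2 1‖
  set a2 := ‖A 2 2‖
  set b0 := ‖B 0 2‖
  set b1 := ‖B 1 2‖
  set b2 := ‖B 2 2‖
  have hAc : (normSq (A 2 2) : ℂ) - normSq (A 2 1) - normSq (A 2 0) = 1 := by
    rw [← Complex.mul_conj, ← Complex.mul_conj, ← Complex.mul_conj]; linear_combination h
  have hBc : (normSq (B 2 2) : ℂ) - normSq (B 1 2) - normSq (B 0 2) = 1 := by
    rw [← Complex.mul_conj, ← Complex.mul_conj, ← Complex.mul_conj]; linear_combination h2
  have hAr : a2 ^ 2 - a1 ^ 2 - a0 ^ 2 = 1 := by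
    have : normSq (A 2 2) - normSq (A 2 1) - normSq (A 2 0) = 1 := by exact_mod_cast hAc
    simpa [← Complex.sq_norm] using this
  have hBr : b2 ^ 2 - b1 ^ 2 - b0 ^ 2 = 1 := by
    have : normSq (B 2 2) - normSq (B 1 2) - normSq (B 0 2) = 1 := by exact_mod_cast hBc
    simpa [← Complex.sq_norm] using this
  have h0 : (0:ℝ) ≤ a0 := norm_nonneg _
  have h1 : (0:ℝ) ≤ a1 := norm_nonneg _
  have h2' : (0:ℝ) ≤ a2 := norm_nonneg _
  have h3 : (0:ℝ) ≤ b0 := norm_nonneg _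
  have h4 : (0:ℝ) ≤ b1 := norm_nonneg _
  have h5 : (0:ℝ) ≤ b2 := norm_nonneg _
  have key : a0 * b0 + a1 * b1 < a2 * b2 := by
    nlinarith [sq_nonneg (a0 * b1 - a1 * b0), sq_nonneg (a0 * b0 + a1 * b1),
      mul_nonneg h2' h5, sq_nonneg (a2 - b2), sq_nonneg (a2 + b2)]
  have habs : ‖A 2 0 * B 0 2 + A 2 1 * B 1 2‖ < ‖A 2 2 * B 2 2‖ := by
    calc ‖A 2 0 * B 0 2 + A 2 1 * B 1 2‖
        ≤ a0 * b0 + a1 * b1 := by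
          simpa [norm_mul] using norm_add_le (A 2 0 * B 0 2) (A 2 1 * B 1 2)
      _ < a2 * b2 := key
      _ = ‖A 2 2 * B 2 2‖ := (norm_mul _ _).symm
  refine ⟨?_, habs⟩
  set s := A 2 0 * B 0 2 + A 2 1 * B 1 2
  set t := A 2 2 * B 2 2
  have htpos : 0 < ‖t‖ := lt_of_le_of_lt (norm_nonneg s) habs
  have hlt1 : ‖s / t‖ < 1 := by
    rw [norm_div, div_lt_one htpos]; exact habs
  have hre : -‖s / t‖ ≤ (s / t).re := by
    have := Complex.abs_re_le_norm (s / t)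
    have := neg_abs_le (s / t).re
    linarith [abs_le.mp (Complex.abs_re_le_norm (s/t) |>.trans_eq rfl) ]
  simp only [Complex.add_re, Complex.one_re]
  linarith
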